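/- Under within-type exchangeability, for every t ≥ 0 the system reliability admits the representation P(T > t) = Σ_{l_1=0}^{n_1} ⋯ Σ_{l_L=0}^{n_L} Σ_{i_1=0}^{n_1−l_1} ⋯ Σ_{i_L=0}^{n_L−l_L} (−1)^{i_1+⋯+i_L} (∏_{k=1}^L C(n_k, l_k) C(n_k−l_k, i_k)) · Φ(l_1,…,l_L) · S( (l_1+i_1, …, l_L+i_L); t ). -/

import Mathlib

set_option maxHeartbeats 1600000

open MeasureTheory Finset

/-- The survival signature of a structure function `φ`:
`Φ(c) = (∏_k C(n_k, c_k))⁻¹ · Σ_{x : exactly c_k working components of each type k} φ(x)`. -/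
noncomputable def survSig {L : ℕ} (n : Fin L → ℕ)
    (φ : ((l : Fin L) → Fin (n l) → Bool) → Bool) (c : Fin L → ℕ) : ℝ :=
  (∑ x : (l : Fin L) → Fin (n l) → Bool,
      if (∀ l, (Finset.univ.filter fun j => x l j = true).card = c l) ∧ φ x = true
      then (1 : ℝ) else 0)
    / ∏ l, (Nat.choose (n l) (c l) : ℝ)

/-! ### Auxiliary general lemmas -/

lemma decide_eq_of_iff' {p : Prop} [Decidable p] {b : Bool} (h : p ↔ b = true) :
    decide p = b := by
  cases b <;> simp_all

lemma iff_of_decide_eq' {p : Prop} [Decidable p] {b : Bool} (h : decide p = b) :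
    p ↔ b = true := by
  subst h; simp

/-- A permutation sending a finset to another finset of the same cardinality. -/
noncomputable def permMap {α : Type*} [Fintype α] [DecidableEq α] (s t : Finset α)
    (h : s.card = t.card) : Equiv.Perm α :=
  (Equiv.sumCompl (· ∈ s)).symm.trans
    (((Fintype.equivOfCardEq (by simp [Fintype.card_coe, h]) :
        {a // a ∈ s} ≃ {a // a ∈ t}).sumCongr
      (Fintype.equivOfCardEq (by
        simp [Fintype.card_subtype_compl, Fintype.card_coe, h]) :
        {a // ¬ a ∈ s} ≃ {a // ¬ a ∈ t})).trans
      (Equiv.sumCompl (· ∈ t)))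

lemma permMap_mem {α : Type*} [Fintype α] [DecidableEq α] (s t : Finset α)
    (h : s.card = t.card) (a : α) : permMap s t h a ∈ t ↔ a ∈ s := by
  unfold permMap
  by_cases ha : a ∈ s
  · simp [Equiv.sumCompl_symm_apply_of_pos ha, ha, Subtype.coe_prop]
  · simp only [Equiv.trans_apply, Equiv.sumCompl_symm_apply_of_neg ha,
      Equiv.sumCongr_apply, Sum.map_inr, Equiv.sumCompl_apply_inr, ha, iff_false]
    exact ((Fintype.equivOfCardEq (by
        simp [Fintype.card_subtype_compl, Fintype.card_coe, h]) :
        {a // ¬ a ∈ s} ≃ {a // ¬ a ∈ t}) ⟨a, ha⟩).2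

/-! ### Counting lemmas -/

lemma card_filter_lt_fin (N c : ℕ) (h : c ≤ N) :
    (univ.filter fun r : Fin N => (r : ℕ) < c).card = c := by
  have : (univ.filter fun r : Fin N => (r : ℕ) < c).card = (Finset.range c).card := by
    refine Finset.card_bij' (fun r _ => (r : ℕ))
      (fun a ha => ⟨a, lt_of_lt_of_le (mem_range.mp ha) h⟩) ?_ ?_ ?_ ?_
    · intro r hr; exact mem_range.mpr (mem_filter.mp hr).2
    · intro a ha; exact mem_filter.mpr ⟨mem_univ _, mem_range.mp ha⟩
    · intro r _; exact Fin.ext rfl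
    · intro a _; rfl
  rw [this, Finset.card_range]

lemma card_boolVec (N c m : ℕ) (hc : c ≤ m) (hm : m ≤ N) :
    (univ.filter fun w : Fin N → Bool =>
      (∀ r : Fin N, (r : ℕ) < c → w r = true)
        ∧ (univ.filter fun r => w r = true).card = m).card
    = Nat.choose (N - c) (m - c) := by
  have hcardcompl : (univ.filter fun r : Fin N => ¬ (r : ℕ) < c).card = N - c := by
    have h1 := Finset.card_filter_add_card_filter_not
      (s := (univ : Finset (Fin N))) (p := fun r : Fin N => (r : ℕ) < c)
    rw [card_filter_lt_fin N c (le_trans hc hm), Finset.card_univ, Fintype.card_fin] at h1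
    omega
  have hpc : (Finset.powersetCard (m - c)
      (univ.filter fun r : Fin N => ¬ (r : ℕ) < c)).card = (N - c).choose (m - c) := by
    rw [Finset.card_powersetCard, hcardcompl]
  rw [← hpc]
  refine Finset.card_bij'
    (fun w _ => univ.filter fun r : Fin N => w r = true ∧ ¬ (r : ℕ) < c)
    (fun S _ => fun r : Fin N => (decide ((r : ℕ) < c) || decide (r ∈ S)))
    ?_ ?_ ?_ ?_
  · intro w hw
    obtain ⟨-, hw⟩ := mem_filter.mp hw
    obtain ⟨hw1, hw2⟩ := hw
    rw [mem_powersetCard]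
    constructor
    · intro r hr
      rw [mem_filter] at hr ⊢
      exact ⟨hr.1, hr.2.2⟩
    · have hsplit := Finset.card_filter_add_card_filter_not
        (s := univ.filter fun r : Fin N => w r = true) (p := fun r : Fin N => (r : ℕ) < c)
      have h2 : ((univ.filter fun r : Fin N => w r = true).filter
          fun r : Fin N => (r : ℕ) < c) = univ.filter fun r : Fin N => (r : ℕ) < c := by
        ext r
        simp only [mem_filter, mem_univ, true_and]
        exact ⟨fun h => h.2, fun h => ⟨hw1 r h, h⟩⟩
      rw [h2, card_filter_lt_fin N c (le_trans hc hm), hw2] at hsplit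
      show (univ.filter fun r : Fin N => w r = true ∧ ¬ (r : ℕ) < c).card = m - c
      rw [← Finset.filter_filter]
      omega
  · intro S hS
    rw [mem_powersetCard] at hS
    obtain ⟨hS1, hS2⟩ := hS
    rw [mem_filter]
    refine ⟨mem_univ _, fun r hr => by simp [hr], ?_⟩
    have hset : (univ.filter fun r : Fin N =>
        (decide ((r : ℕ) < c) || decide (r ∈ S)) = true)
        = (univ.filter fun r : Fin N => (r : ℕ) < c) ∪ S := by
      ext r
      simp [mem_filter, mem_union]
    have hdisj : Disjoint (univ.filter fun r : Fin N => (r : ℕ) < c) S := by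
      rw [Finset.disjoint_left]
      intro r hr hrS
      have := hS1 hrS
      rw [mem_filter] at this hr
      exact this.2 hr.2
    rw [hset, Finset.card_union_of_disjoint hdisj,
      card_filter_lt_fin N c (le_trans hc hm), hS2]
    omega
  · intro w hw
    obtain ⟨-, hw1, -⟩ := mem_filter.mp hw
    funext r
    by_cases hr : (r : ℕ) < c
    · simp [hr, hw1 r hr]
    · cases hwr : w r <;> simp [hr, hwr, mem_filter] <;> omega
  · intro S hS
    rw [mem_powersetCard] at hS
    ext r
    simp only [mem_filter, mem_univ, true_and, Bool.or_eq_true, decide_eq_true_eq]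
    constructor
    · rintro ⟨h1 | h1, h2⟩
      · exact absurd h1 h2
      · exact h1
    · intro hr
      have := hS.1 hr
      rw [mem_filter] at this
      exact ⟨Or.inr hr, this.2⟩

/-! ### Boolean state-vector combinatorics -/

section Comb
variable {L : ℕ} {n : Fin L → ℕ}

/-- Number of working components of type `k`. -/
def cntB (x : (l : Fin L) → Fin (n l) → Bool) (k : Fin L) : ℕ :=
  (univ.filter fun j => x k j = true).card

/-- Total number of working components. -/
def wtB (x : (l : Fin L) → Fin (n l) → Bool) : ℕ := ∑ k, cntB x k

/-- Pointwise order on state vectors. -/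
def leB (x y : (l : Fin L) → Fin (n l) → Bool) : Prop :=
  ∀ l j, x l j = true → y l j = true

instance (x y : (l : Fin L) → Fin (n l) → Bool) : Decidable (leB x y) := by
  unfold leB; infer_instance

/-- Canonical state vector: the first `c k` components of each type work. -/
def xcanB (n : Fin L → ℕ) (c : Fin L → ℕ) : (l : Fin L) → Fin (n l) → Bool :=
  fun k j => decide ((j : ℕ) < c k)

lemma cntB_le (z : (l : Fin L) → Fin (n l) → Bool) (k : Fin L) : cntB z k ≤ n k := by
  rw [cntB]
  simpa using Finset.card_filter_le (univ : Finset (Fin (n k))) _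

lemma cntB_mono {x z : (l : Fin L) → Fin (n l) → Bool} (h : leB x z) (k : Fin L) :
    cntB x k ≤ cntB z k := by
  refine Finset.card_le_card ?_
  intro j hj
  rw [mem_filter] at hj ⊢
  exact ⟨hj.1, h k j hj.2⟩

lemma cntB_xcanB (c : Fin L → ℕ) (h : ∀ k, c k ≤ n k) (k : Fin L) :
    cntB (xcanB n c) k = c k := by
  unfold cntB xcanB
  simp only [decide_eq_true_eq]
  exact card_filter_lt_fin _ _ (h k)

lemma leB_xcanB_iff (c : Fin L → ℕ) (z : (l : Fin L) → Fin (n l) → Bool) :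
    leB (xcanB n c) z ↔ ∀ k (j : Fin (n k)), (j : ℕ) < c k → z k j = true := by
  unfold leB xcanB
  simp

lemma neg_one_pow_wtB (z : (l : Fin L) → Fin (n l) → Bool) :
    (-1 : ℝ) ^ (wtB z) = ∏ l, ∏ j, (if z l j = true then (-1 : ℝ) else 1) := by
  rw [wtB, ← Finset.prod_pow_eq_pow_sum]
  refine Finset.prod_congr rfl fun l _ => ?_
  rw [cntB, Finset.card_filter, ← Finset.prod_pow_eq_pow_sum]
  refine Finset.prod_congr rfl fun j _ => ?_
  by_cases h : z l j = true <;> simp [h]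

lemma sum_sign_interval (x y : (l : Fin L) → Fin (n l) → Bool) :
    ∑ z : (l : Fin L) → Fin (n l) → Bool,
      (if leB x z ∧ leB z y then (-1 : ℝ) ^ (wtB z) else 0)
    = if x = y then (-1 : ℝ) ^ (wtB x) else 0 := by
  have key : ∀ z : (l : Fin L) → Fin (n l) → Bool,
      (if leB x z ∧ leB z y then (-1 : ℝ) ^ (wtB z) else 0)
      = ∏ l, ∏ j, (if (x l j = true → z l j = true) ∧ (z l j = true → y l j = true)
          then (if z l j = true then (-1 : ℝ) else 1) else 0) := by
    intro z
    by_cases hc : leB x z ∧ leB z y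
    · rw [if_pos hc, neg_one_pow_wtB z]
      exact Finset.prod_congr rfl fun l _ => Finset.prod_congr rfl fun j _ =>
        (if_pos ⟨hc.1 l j, hc.2 l j⟩).symm
    · rw [if_neg hc]
      have hex : ∃ l, ∃ j, ¬((x l j = true → z l j = true) ∧
          (z l j = true → y l j = true)) := by
        by_contra hall
        push_neg at hall
        exact hc ⟨fun l j => (hall l j).1, fun l j => (hall l j).2⟩
      obtain ⟨l, j, hlj⟩ := hex
      refine (Finset.prod_eq_zero (mem_univ l) ?_).symm
      refine Finset.prod_eq_zero (mem_univ j) ?_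
      rw [if_neg hlj]
  calc ∑ z : (l : Fin L) → Fin (n l) → Bool,
        (if leB x z ∧ leB z y then (-1 : ℝ) ^ (wtB z) else 0)
      = ∑ z : (l : Fin L) → Fin (n l) → Bool, ∏ l, ∏ j,
          (if (x l j = true → z l j = true) ∧ (z l j = true → y l j = true)
            then (if z l j = true then (-1 : ℝ) else 1) else 0) :=
        Finset.sum_congr rfl fun z _ => key z
    _ = ∏ l, ∑ w : Fin (n l) → Bool, ∏ j,
          (if (x l j = true → w j = true) ∧ (w j = true → y l j = true)
            then (if w j = true then (-1 : ℝ) else 1) else 0) :=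
        (Fintype.prod_sum fun l (w : Fin (n l) → Bool) => ∏ j,
          (if (x l j = true → w j = true) ∧ (w j = true → y l j = true)
            then (if w j = true then (-1 : ℝ) else 1) else 0)).symm
    _ = ∏ l, ∏ j, ∑ b : Bool,
          (if (x l j = true → b = true) ∧ (b = true → y l j = true)
            then (if b = true then (-1 : ℝ) else 1) else 0) := by
        refine Finset.prod_congr rfl fun l _ => ?_
        exact (Fintype.prod_sum fun j (b : Bool) =>
          (if (x l j = true → b = true) ∧ (b = true → y l j = true)
            then (if b = true then (-1 : ℝ) else 1) else 0)).symm
    _ = if x = y then (-1 : ℝ) ^ (wtB x) else 0 := by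
        by_cases hxy : x = y
        · subst hxy
          rw [if_pos rfl, neg_one_pow_wtB x]
          refine Finset.prod_congr rfl fun l _ => Finset.prod_congr rfl fun j _ => ?_
          rw [Fintype.sum_bool]
          by_cases h : x l j = true <;> simp [h]
        · rw [if_neg hxy]
          have hex : ∃ l, ∃ j, x l j ≠ y l j := by
            by_contra hall
            push_neg at hall
            exact hxy (funext fun l => funext fun j => hall l j)
          obtain ⟨l, j, hlj⟩ := hex
          refine Finset.prod_eq_zero (mem_univ l) ?_
          refine Finset.prod_eq_zero (mem_univ j) ?_
          rw [Fintype.sum_bool]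
          rcases Bool.eq_false_or_eq_true (x l j) with hx | hx <;>
            rcases Bool.eq_false_or_eq_true (y l j) with hy | hy <;>
              simp [hx, hy] at hlj ⊢

lemma mobius_inv (f G : ((l : Fin L) → Fin (n l) → Bool) → ℝ)
    (hGf : ∀ x, G x = ∑ y, if leB x y then f y else 0)
    (x : (l : Fin L) → Fin (n l) → Bool) :
    ∑ z, (if leB x z then (-1 : ℝ) ^ (wtB x + wtB z) * G z else 0) = f x := by
  have step1 : ∀ z, (if leB x z then (-1 : ℝ) ^ (wtB x + wtB z) * G z else 0)
      = ∑ y, (if leB x z ∧ leB z y then (-1 : ℝ) ^ (wtB z) else 0)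
          * ((-1 : ℝ) ^ (wtB x) * f y) := by
    intro z
    by_cases h : leB x z
    · rw [if_pos h, hGf z, Finset.mul_sum]
      refine Finset.sum_congr rfl fun y _ => ?_
      by_cases h2 : leB z y
      · rw [if_pos (show leB x z ∧ leB z y from ⟨h, h2⟩), if_pos h2, pow_add]; ring
      · rw [if_neg (show ¬(leB x z ∧ leB z y) from fun hh => h2 hh.2), if_neg h2]; ring
    · rw [if_neg h]
      refine (Finset.sum_eq_zero fun y _ => ?_).symm
      rw [if_neg (show ¬(leB x z ∧ leB z y) from fun hh => h hh.1), zero_mul]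
  calc ∑ z, (if leB x z then (-1 : ℝ) ^ (wtB x + wtB z) * G z else 0)
      = ∑ z, ∑ y, (if leB x z ∧ leB z y then (-1 : ℝ) ^ (wtB z) else 0)
          * ((-1 : ℝ) ^ (wtB x) * f y) := Finset.sum_congr rfl fun z _ => step1 z
    _ = ∑ y, (∑ z, (if leB x z ∧ leB z y then (-1 : ℝ) ^ (wtB z) else 0))
          * ((-1 : ℝ) ^ (wtB x) * f y) := by
        rw [Finset.sum_comm]
        exact Finset.sum_congr rfl fun y _ => (Finset.sum_mul _ _ _).symm
    _ = ∑ y, (if x = y then (-1 : ℝ) ^ (wtB x) else 0) * ((-1 : ℝ) ^ (wtB x) * f y) := by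
        refine Finset.sum_congr rfl fun y _ => ?_
        rw [sum_sign_interval]
    _ = f x := by
        simp only [ite_mul, zero_mul]
        rw [Finset.sum_ite_eq]
        rw [if_pos (mem_univ x), ← mul_assoc, ← pow_add, ← two_mul, pow_mul]
        simp

lemma card_class (c m : Fin L → ℕ) (hl : ∀ k, c k ≤ m k) (hm : ∀ k, m k ≤ n k) :
    (univ.filter fun z : (l : Fin L) → Fin (n l) → Bool =>
      (∀ k (j : Fin (n k)), (j : ℕ) < c k → z k j = true) ∧ ∀ k, cntB z k = m k).card
    = ∏ k, Nat.choose (n k - c k) (m k - c k) := by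
  have hpi : (univ.filter fun z : (l : Fin L) → Fin (n l) → Bool =>
      (∀ k (j : Fin (n k)), (j : ℕ) < c k → z k j = true) ∧ ∀ k, cntB z k = m k)
      = Fintype.piFinset (fun k => univ.filter fun w : Fin (n k) → Bool =>
          (∀ j : Fin (n k), (j : ℕ) < c k → w j = true)
            ∧ (univ.filter fun j => w j = true).card = m k) := by
    ext z
    simp only [mem_filter, mem_univ, true_and, Fintype.mem_piFinset]
    constructor
    · rintro ⟨h1, h2⟩ k; exact ⟨h1 k, h2 k⟩
    · intro h; exact ⟨fun k => (h k).1, fun k => (h k).2⟩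
  rw [hpi, Fintype.card_piFinset]
  exact Finset.prod_congr rfl fun k _ => card_boolVec _ _ _ (hl k) (hm k)

end Comb

/-! ### Measure-theoretic helpers -/

section Meas
variable {Ω : Type*} [MeasurableSpace Ω] {L : ℕ} {n : Fin L → ℕ}

noncomputable def fP (P : Measure Ω) (X : Ω → ((l : Fin L) → Fin (n l) → Bool))
    (x : (l : Fin L) → Fin (n l) → Bool) : ℝ := (P (X ⁻¹' {x})).toReal

noncomputable def GP (P : Measure Ω) (X : Ω → ((l : Fin L) → Fin (n l) → Bool))
    (x : (l : Fin L) → Fin (n l) → Bool) : ℝ :=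
  (P (X ⁻¹' {y | leB x y})).toReal

lemma sum_fP (P : Measure Ω) [IsFiniteMeasure P]
    (X : Ω → ((l : Fin L) → Fin (n l) → Bool)) (hX : Measurable X)
    (s : Finset ((l : Fin L) → Fin (n l) → Bool)) :
    (P (X ⁻¹' ↑s)).toReal = ∑ x ∈ s, fP P X x := by
  have hU : X ⁻¹' ↑s = ⋃ x ∈ s, X ⁻¹' {x} := by
    ext ω; simp
  rw [hU, measure_biUnion_finset ?_ ?_]
  · exact ENNReal.toReal_sum fun x _ => measure_ne_top P _
  · intro x _ y _ hxy
    exact Disjoint.preimage X (by simp [hxy])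
  · intro x _
    exact hX (measurableSet_singleton x)

lemma GP_eq_sum (P : Measure Ω) [IsFiniteMeasure P]
    (X : Ω → ((l : Fin L) → Fin (n l) → Bool)) (hX : Measurable X)
    (x : (l : Fin L) → Fin (n l) → Bool) :
    GP P X x = ∑ y, if leB x y then fP P X y else 0 := by
  have h1 : {y | leB x y} = ↑(univ.filter fun y => leB x y) := by
    ext y; simp
  rw [GP, h1, sum_fP P X hX, Finset.sum_filter]

end Meas

/-- Under within-type exchangeability, the system reliability admits
the inclusion–exclusion representation in terms of the survival signature and the joint
survival probabilities `S((l₁+i₁,…,l_L+i_L); t)`. -/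
theorem stmt_5
    {Ω : Type*} [MeasurableSpace Ω] (P : Measure Ω) [IsProbabilityMeasure P]
    {L : ℕ} (hL : 1 ≤ L) (n : Fin L → ℕ) (hn : ∀ l, 1 ≤ n l)
    (T : (l : Fin L) → Fin (n l) → Ω → ℝ)
    (hTmeas : ∀ l j, Measurable (T l j))
    (hexch : ∀ σ : (l : Fin L) → Equiv.Perm (Fin (n l)),
      Measure.map (fun ω (l : Fin L) (j : Fin (n l)) => T l (σ l j) ω) P
        = Measure.map (fun ω (l : Fin L) (j : Fin (n l)) => T l j ω) P)
    (φ : ((l : Fin L) → Fin (n l) → Bool) → Bool) (hφ : Monotone φ)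
    (Tsys : Ω → ℝ) (hTsys : Measurable Tsys)
    (hT : ∀ t : ℝ, 0 ≤ t →
      {ω | t < Tsys ω} = {ω | φ (fun l j => decide (t < T l j ω)) = true})
    (t : ℝ) (ht : 0 ≤ t) :
    (P {ω | t < Tsys ω}).toReal
    = ∑ l : (k : Fin L) → Fin (n k + 1),
        ∑ i : (k : Fin L) → Fin (n k - (l k : ℕ) + 1),
          (-1 : ℝ) ^ (∑ k, (i k : ℕ))
            * (∏ k, (Nat.choose (n k) (l k) : ℝ) * (Nat.choose (n k - (l k : ℕ)) (i k) : ℝ))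
            * survSig n φ (fun k => (l k : ℕ))
            * (P {ω | ∀ k, ∀ r : Fin (n k),
                (r : ℕ) < (l k : ℕ) + (i k : ℕ) → t < T k r ω}).toReal := by
  classical
  set X : Ω → ((l : Fin L) → Fin (n l) → Bool) :=
    fun ω l j => decide (t < T l j ω) with hXdef
  have hXmeas : Measurable X := by
    refine measurable_pi_lambda _ fun l => measurable_pi_lambda _ fun j => ?_
    refine measurable_to_countable' fun b => ?_
    cases b
    · have : (fun ω => decide (t < T l j ω)) ⁻¹' {false}
          = ((T l j) ⁻¹' (Set.Ioi t))ᶜ := by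
        ext ω; simp
      rw [this]
      exact ((hTmeas l j) measurableSet_Ioi).compl
    · have : (fun ω => decide (t < T l j ω)) ⁻¹' {true}
          = (T l j) ⁻¹' (Set.Ioi t) := by
        ext ω; simp
      rw [this]
      exact (hTmeas l j) measurableSet_Ioi
  set f : ((l : Fin L) → Fin (n l) → Bool) → ℝ := fP P X with hfdef
  set G : ((l : Fin L) → Fin (n l) → Bool) → ℝ := GP P X with hGdef
  have hGf : ∀ x, G x = ∑ y, if leB x y then f y else 0 :=
    fun x => GP_eq_sum P X hXmeas x
  -- measurability of the value maps
  have hY : Measurable (fun ω (l : Fin L) (j : Fin (n l)) => T l j ω) :=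
    measurable_pi_lambda _ fun l => measurable_pi_lambda _ fun j => hTmeas l j
  have hYσ : ∀ σ : (l : Fin L) → Equiv.Perm (Fin (n l)),
      Measurable (fun ω (l : Fin L) (j : Fin (n l)) => T l (σ l j) ω) :=
    fun σ => measurable_pi_lambda _ fun l => measurable_pi_lambda _ fun j =>
      hTmeas l (σ l j)
  have coordMeas : ∀ (l : Fin L) (j : Fin (n l)),
      Measurable (fun g : (l : Fin L) → Fin (n l) → ℝ => g l j) :=
    fun l j => (measurable_pi_apply j).comp (measurable_pi_apply l)
  have coordIoi : ∀ (l : Fin L) (j : Fin (n l)),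
      MeasurableSet {g : (l : Fin L) → Fin (n l) → ℝ | t < g l j} :=
    fun l j => (coordMeas l j) measurableSet_Ioi
  have hTwist : ∀ (σ : (l : Fin L) → Equiv.Perm (Fin (n l)))
      (U : Set ((l : Fin L) → Fin (n l) → ℝ)), MeasurableSet U →
      P ((fun ω (l : Fin L) (j : Fin (n l)) => T l (σ l j) ω) ⁻¹' U)
        = P ((fun ω (l : Fin L) (j : Fin (n l)) => T l j ω) ⁻¹' U) := by
    intro σ U hU
    rw [← Measure.map_apply (hYσ σ) hU, hexch σ, Measure.map_apply hY hU]
  -- permutation invariance of f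
  have hfσ : ∀ (σ : (l : Fin L) → Equiv.Perm (Fin (n l)))
      (x : (l : Fin L) → Fin (n l) → Bool),
      f (fun l j => x l (σ l j)) = f x := by
    intro σ x
    set U : Set ((l : Fin L) → Fin (n l) → ℝ) :=
      {g | ∀ l j, t < g l j ↔ x l j = true} with hUdef
    have hUm : MeasurableSet U := by
      have : U = ⋂ l, ⋂ j, {g : (l : Fin L) → Fin (n l) → ℝ | t < g l j ↔ x l j = true} := by
        ext g; simp [hUdef]
      rw [this]
      refine MeasurableSet.iInter fun l => MeasurableSet.iInter fun j => ?_
      by_cases hx : x l j = true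
      · have : {g : (l : Fin L) → Fin (n l) → ℝ | t < g l j ↔ x l j = true}
            = {g : (l : Fin L) → Fin (n l) → ℝ | t < g l j} := by
          ext g; simp [hx]
        rw [this]; exact coordIoi l j
      · have : {g : (l : Fin L) → Fin (n l) → ℝ | t < g l j ↔ x l j = true}
            = {g : (l : Fin L) → Fin (n l) → ℝ | t < g l j}ᶜ := by
          ext g; simp [hx]
        rw [this]; exact (coordIoi l j).compl
    have e1 : (fun ω (l : Fin L) (j : Fin (n l)) => T l j ω) ⁻¹' U = X ⁻¹' {x} := by
      ext ω
      simp only [Set.mem_preimage, Set.mem_setOf_eq, Set.mem_singleton_iff, hUdef]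
      constructor
      · intro h; funext l j; exact decide_eq_of_iff' (h l j)
      · intro h l j
        exact iff_of_decide_eq' (congrFun (congrFun h l) j)
    have e2 : (fun ω (l : Fin L) (j : Fin (n l)) => T l ((σ l)⁻¹ j) ω) ⁻¹' U
        = X ⁻¹' {fun l j => x l (σ l j)} := by
      ext ω
      simp only [Set.mem_preimage, Set.mem_setOf_eq, Set.mem_singleton_iff, hUdef]
      constructor
      · intro h; funext l j
        refine decide_eq_of_iff' ?_
        have := h l (σ l j)
        rwa [Equiv.Perm.inv_def, Equiv.symm_apply_apply] at this
      · intro h l j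
        have := iff_of_decide_eq' (congrFun (congrFun h l) ((σ l)⁻¹ j))
        rwa [Equiv.Perm.inv_def, Equiv.apply_symm_apply] at this
    show fP P X (fun l j => x l (σ l j)) = fP P X x
    rw [fP, fP, ← e2, ← e1, hTwist (fun l => (σ l)⁻¹) U hUm]
  -- permutation invariance of G
  have hGσ : ∀ (σ : (l : Fin L) → Equiv.Perm (Fin (n l)))
      (x : (l : Fin L) → Fin (n l) → Bool),
      G (fun l j => x l (σ l j)) = G x := by
    intro σ x
    set U : Set ((l : Fin L) → Fin (n l) → ℝ) :=
      {g | ∀ l j, x l j = true → t < g l j} with hUdef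
    have hUm : MeasurableSet U := by
      have : U = ⋂ l, ⋂ j, {g : (l : Fin L) → Fin (n l) → ℝ | x l j = true → t < g l j} := by
        ext g; simp [hUdef]
      rw [this]
      refine MeasurableSet.iInter fun l => MeasurableSet.iInter fun j => ?_
      by_cases hx : x l j = true
      · have : {g : (l : Fin L) → Fin (n l) → ℝ | x l j = true → t < g l j}
            = {g : (l : Fin L) → Fin (n l) → ℝ | t < g l j} := by
          ext g; simp [hx]
        rw [this]; exact coordIoi l j
      · have : {g : (l : Fin L) → Fin (n l) → ℝ | x l j = true → t < g l j}
            = Set.univ := by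
          ext g; simp [hx]
        rw [this]; exact MeasurableSet.univ
    have e1 : (fun ω (l : Fin L) (j : Fin (n l)) => T l j ω) ⁻¹' U
        = X ⁻¹' {y | leB x y} := by
      ext ω
      simp only [Set.mem_preimage, Set.mem_setOf_eq, hUdef]
      constructor
      · intro h l j hx
        show decide (t < T l j ω) = true
        simpa using h l j hx
      · intro h l j hx
        have h2 : decide (t < T l j ω) = true := h l j hx
        simpa using h2
    have e2 : (fun ω (l : Fin L) (j : Fin (n l)) => T l ((σ l)⁻¹ j) ω) ⁻¹' U
        = X ⁻¹' {y | leB (fun l j => x l (σ l j)) y} := by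
      ext ω
      simp only [Set.mem_preimage, Set.mem_setOf_eq, hUdef]
      constructor
      · intro h l j hx
        have h2 := h l (σ l j) hx
        rw [Equiv.Perm.inv_def, Equiv.symm_apply_apply] at h2
        show decide (t < T l j ω) = true
        simpa using h2
      · intro h l j hx
        have h3 : decide (t < T l ((σ l)⁻¹ j) ω) = true :=
          h l ((σ l)⁻¹ j) (by simpa using hx)
        simpa using h3
    show GP P X (fun l j => x l (σ l j)) = GP P X x
    rw [GP, GP, ← e2, ← e1, hTwist (fun l => (σ l)⁻¹) U hUm]
  -- reduction to canonical state vectors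
  have hcanrep : ∀ x : (l : Fin L) → Fin (n l) → Bool,
      ∃ σ : (l : Fin L) → Equiv.Perm (Fin (n l)),
        x = fun k j => xcanB n (cntB x) k (σ k j) := by
    intro x
    have hcard : ∀ k : Fin L, (univ.filter fun j => x k j = true).card
        = (univ.filter fun j : Fin (n k) => (j : ℕ) < cntB x k).card := by
      intro k
      rw [card_filter_lt_fin _ _ (cntB_le x k)]
      rfl
    refine ⟨fun k => permMap _ _ (hcard k), ?_⟩
    funext k j
    have hm := permMap_mem (univ.filter fun j => x k j = true)
      (univ.filter fun j' : Fin (n k) => (j' : ℕ) < cntB x k) (hcard k) j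
    rw [mem_filter, mem_filter] at hm
    have h1 : ((permMap _ _ (hcard k) j : Fin (n k)) : ℕ) < cntB x k ↔ x k j = true := by
      constructor
      · intro h; exact (hm.mp ⟨mem_univ _, h⟩).2
      · intro h; exact (hm.mpr ⟨mem_univ _, h⟩).2
    exact (decide_eq_of_iff' h1).symm
  have hfcan : ∀ x, f x = f (xcanB n (cntB x)) := by
    intro x
    obtain ⟨σ, hσ⟩ := hcanrep x
    conv_lhs => rw [hσ]
    exact hfσ σ (xcanB n (cntB x))
  have hGcan : ∀ x, G x = G (xcanB n (cntB x)) := by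
    intro x
    obtain ⟨σ, hσ⟩ := hcanrep x
    conv_lhs => rw [hσ]
    exact hGσ σ (xcanB n (cntB x))
  -- the left-hand side as a sum over state vectors
  have hLHS : (P {ω | t < Tsys ω}).toReal = ∑ x, if φ x = true then f x else 0 := by
    rw [hT t ht]
    have hset : {ω | φ (fun l j => decide (t < T l j ω)) = true}
        = X ⁻¹' ↑(univ.filter fun x => φ x = true) := by
      ext ω; simp [hXdef]
    rw [hset]
    rw [show (P (X ⁻¹' ↑(univ.filter fun x => φ x = true))).toReal
      = ∑ x ∈ univ.filter (fun x => φ x = true), f x from sum_fP P X hXmeas _]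
    rw [Finset.sum_filter]
  -- the probabilities appearing on the right-hand side
  have hevent : ∀ c : Fin L → ℕ,
      (P {ω | ∀ k, ∀ r : Fin (n k), (r : ℕ) < c k → t < T k r ω}).toReal
      = G (xcanB n c) := by
    intro c
    have hset : {ω | ∀ k, ∀ r : Fin (n k), (r : ℕ) < c k → t < T k r ω}
        = X ⁻¹' {y | leB (xcanB n c) y} := by
      ext ω
      simp only [Set.mem_setOf_eq, Set.mem_preimage, leB_xcanB_iff, hXdef,
        decide_eq_true_eq]
    rw [hset]
    rfl
  -- survival signature denominator clearing
  have hsurv : ∀ l : (k : Fin L) → Fin (n k + 1),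
      survSig n φ (fun k => (l k : ℕ)) * ∏ k, (Nat.choose (n k) (l k) : ℝ)
      = ∑ x, if (∀ k, cntB x k = (l k : ℕ)) ∧ φ x = true then (1 : ℝ) else 0 := by
    intro l
    rw [survSig, div_mul_cancel₀]
    · rfl
    · refine Finset.prod_ne_zero_iff.mpr fun k _ => ?_
      exact Nat.cast_ne_zero.mpr (Nat.choose_pos (Nat.lt_succ_iff.mp (l k).isLt)).ne'
  -- the key inclusion-exclusion step, for each fixed count vector l
  have hstep : ∀ l : (k : Fin L) → Fin (n k + 1),
      ∑ i : (k : Fin L) → Fin (n k - (l k : ℕ) + 1),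
        (-1 : ℝ) ^ (∑ k, (i k : ℕ))
          * (∏ k, (Nat.choose (n k - (l k : ℕ)) (i k : ℕ) : ℝ))
          * G (xcanB n fun k => (l k : ℕ) + (i k : ℕ))
      = f (xcanB n fun k => (l k : ℕ)) := by
    intro l
    have hln : ∀ k, (l k : ℕ) ≤ n k := fun k => Nat.lt_succ_iff.mp (l k).isLt
    have hcnt0 : ∀ k, cntB (xcanB n fun k => (l k : ℕ)) k = (l k : ℕ) :=
      fun k => cntB_xcanB _ hln k
    rw [← mobius_inv f G hGf (xcanB n fun k => (l k : ℕ))]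
    have expand : ∀ z, (if leB (xcanB n fun k => (l k : ℕ)) z
        then (-1 : ℝ) ^ (wtB (xcanB n fun k => (l k : ℕ)) + wtB z) * G z else 0)
        = ∑ i : (k : Fin L) → Fin (n k - (l k : ℕ) + 1),
            (if leB (xcanB n fun k => (l k : ℕ)) z
                ∧ (∀ k, cntB z k = (l k : ℕ) + (i k : ℕ))
              then (-1 : ℝ) ^ (wtB (xcanB n fun k => (l k : ℕ)) + wtB z) * G z else 0) := by
      intro z
      by_cases h : leB (xcanB n fun k => (l k : ℕ)) z
      · have hlec : ∀ k, (l k : ℕ) ≤ cntB z k := fun k => (hcnt0 k) ▸ cntB_mono h k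
        have hcn : ∀ k, cntB z k ≤ n k := fun k => cntB_le z k
        rw [if_pos h]
        rw [Fintype.sum_eq_single
          (fun k => (⟨cntB z k - (l k : ℕ), by have := hlec k; have := hcn k; omega⟩ :
            Fin (n k - (l k : ℕ) + 1)))]
        · rw [if_pos ⟨h, fun k => by
            show cntB z k = (l k : ℕ) + (cntB z k - (l k : ℕ))
            have := hlec k
            omega⟩]
        · intro i hi
          rw [if_neg]
          rintro ⟨-, h2⟩
          apply hi
          funext k
          apply Fin.ext
          show (i k : ℕ) = cntB z k - (l k : ℕ)
          have := h2 k
          omega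
      · rw [if_neg h]
        exact (Finset.sum_eq_zero fun i _ =>
          if_neg (fun hh => h hh.1)).symm
    rw [Finset.sum_congr rfl fun z _ => expand z, Finset.sum_comm]
    refine Finset.sum_congr rfl fun i _ => ?_
    have him : ∀ k, (i k : ℕ) ≤ n k - (l k : ℕ) := fun k => Nat.lt_succ_iff.mp (i k).isLt
    have hconst : ∀ z, (if leB (xcanB n fun k => (l k : ℕ)) z
          ∧ (∀ k, cntB z k = (l k : ℕ) + (i k : ℕ))
        then (-1 : ℝ) ^ (wtB (xcanB n fun k => (l k : ℕ)) + wtB z) * G z else 0)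
        = (if leB (xcanB n fun k => (l k : ℕ)) z
            ∧ (∀ k, cntB z k = (l k : ℕ) + (i k : ℕ))
          then (-1 : ℝ) ^ (∑ k, (i k : ℕ))
            * G (xcanB n fun k => (l k : ℕ) + (i k : ℕ)) else 0) := by
      intro z
      by_cases h : leB (xcanB n fun k => (l k : ℕ)) z
          ∧ (∀ k, cntB z k = (l k : ℕ) + (i k : ℕ))
      · rw [if_pos h, if_pos h]
        obtain ⟨h1, h2⟩ := h
        have hw0 : wtB (xcanB n fun k => (l k : ℕ)) = ∑ k, (l k : ℕ) := by
          rw [wtB]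
          exact Finset.sum_congr rfl fun k _ => hcnt0 k
        have hwz : wtB z = ∑ k, ((l k : ℕ) + (i k : ℕ)) := by
          rw [wtB]
          exact Finset.sum_congr rfl fun k _ => h2 k
        have hsgn : (-1 : ℝ) ^ (wtB (xcanB n fun k => (l k : ℕ)) + wtB z)
            = (-1 : ℝ) ^ (∑ k, (i k : ℕ)) := by
          rw [hw0, hwz, Finset.sum_add_distrib,
            show (∑ k, (l k : ℕ)) + ((∑ k, (l k : ℕ)) + ∑ k, (i k : ℕ))
              = 2 * (∑ k, (l k : ℕ)) + ∑ k, (i k : ℕ) by ring,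
            pow_add, pow_mul, neg_one_sq, one_pow, one_mul]
        rw [hsgn, hGcan z, show cntB z = fun k => (l k : ℕ) + (i k : ℕ) from funext h2]
      · rw [if_neg h, if_neg h]
    rw [Finset.sum_congr rfl fun z _ => hconst z]
    rw [← Finset.sum_filter, Finset.sum_const, nsmul_eq_mul]
    have hfilter : (univ.filter fun z : (l : Fin L) → Fin (n l) → Bool =>
        leB (xcanB n fun k => (l k : ℕ)) z ∧ (∀ k, cntB z k = (l k : ℕ) + (i k : ℕ)))
        = univ.filter fun z : (l : Fin L) → Fin (n l) → Bool =>
            (∀ k (j : Fin (n k)), (j : ℕ) < (l k : ℕ) → z k j = true)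
              ∧ ∀ k, cntB z k = (l k : ℕ) + (i k : ℕ) := by
      refine Finset.filter_congr fun z _ => ?_
      rw [leB_xcanB_iff]
    rw [hfilter, card_class (fun k => (l k : ℕ)) (fun k => (l k : ℕ) + (i k : ℕ))
      (fun k => Nat.le_add_right _ _) (fun k => by
        show (l k : ℕ) + (i k : ℕ) ≤ n k
        have := him k; have := hln k; omega)]
    rw [Nat.cast_prod]
    have hchoose : ∀ k : Fin L,
        ((Nat.choose (n k - (l k : ℕ)) ((l k : ℕ) + (i k : ℕ) - (l k : ℕ)) : ℕ) : ℝ)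
        = (Nat.choose (n k - (l k : ℕ)) (i k : ℕ) : ℝ) := by
      intro k
      have heq : (l k : ℕ) + (i k : ℕ) - (l k : ℕ) = (i k : ℕ) := by omega
      rw [heq]
    rw [Finset.prod_congr rfl fun k _ => hchoose k]
    ring
  -- final assembly
  rw [hLHS]
  have hswap : ∑ x, (if φ x = true then f x else 0)
      = ∑ l : (k : Fin L) → Fin (n k + 1),
          (∑ x, if (∀ k, cntB x k = (l k : ℕ)) ∧ φ x = true then (1 : ℝ) else 0)
            * f (xcanB n fun k => (l k : ℕ)) := by
    have h1 : ∀ l : (k : Fin L) → Fin (n k + 1),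
        (∑ x, if (∀ k, cntB x k = (l k : ℕ)) ∧ φ x = true then (1 : ℝ) else 0)
          * f (xcanB n fun k => (l k : ℕ))
        = ∑ x, if (∀ k, cntB x k = (l k : ℕ)) ∧ φ x = true
            then f (xcanB n fun k => (l k : ℕ)) else 0 := by
      intro l
      rw [Finset.sum_mul]
      refine Finset.sum_congr rfl fun x _ => ?_
      by_cases h : (∀ k, cntB x k = (l k : ℕ)) ∧ φ x = true <;> simp [h]
    rw [Finset.sum_congr rfl fun l _ => h1 l, Finset.sum_comm]
    refine Finset.sum_congr rfl fun x _ => ?_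
    by_cases hφx : φ x = true
    · rw [if_pos hφx]
      rw [Fintype.sum_eq_single
        (fun k => (⟨cntB x k, Nat.lt_succ_of_le (cntB_le x k)⟩ : Fin (n k + 1)))]
      · rw [if_pos ⟨fun k => rfl, hφx⟩]
        exact hfcan x
      · intro l hl
        rw [if_neg]
        rintro ⟨h2, -⟩
        apply hl
        funext k
        exact Fin.ext (h2 k).symm
    · rw [if_neg hφx]
      exact (Finset.sum_eq_zero fun l _ => if_neg (fun hh => hφx hh.2)).symm
  rw [hswap]
  refine Finset.sum_congr rfl fun l _ => ?_
  rw [← hstep l, Finset.mul_sum]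
  refine Finset.sum_congr rfl fun i _ => ?_
  rw [hevent (fun k => (l k : ℕ) + (i k : ℕ)), Finset.prod_mul_distrib]
  calc (∑ x, if (∀ k, cntB x k = (l k : ℕ)) ∧ φ x = true then (1 : ℝ) else 0)
        * ((-1 : ℝ) ^ (∑ k, (i k : ℕ))
          * (∏ k, (Nat.choose (n k - (l k : ℕ)) (i k : ℕ) : ℝ))
          * G (xcanB n fun k => (l k : ℕ) + (i k : ℕ)))
      = (survSig n φ (fun k => (l k : ℕ)) * ∏ k, (Nat.choose (n k) (l k) : ℝ))
        * ((-1 : ℝ) ^ (∑ k, (i k : ℕ))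
          * (∏ k, (Nat.choose (n k - (l k : ℕ)) (i k : ℕ) : ℝ))
          * G (xcanB n fun k => (l k : ℕ) + (i k : ℕ))) := by rw [hsurv l]
    _ = (-1 : ℝ) ^ (∑ k, (i k : ℕ))
        * ((∏ k, (Nat.choose (n k) (l k) : ℝ))
          * ∏ k, (Nat.choose (n k - (l k : ℕ)) (i k : ℕ) : ℝ))
        * survSig n φ (fun k => (l k : ℕ))
        * G (xcanB n fun k => (l k : ℕ) + (i k : ℕ)) := by ring
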